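/- For any two probability distributions P, Q on a finite set and any n ≥ 1, the Jensen–Shannon divergence is subadditive under tensor powers: JS_p(P^{⊗n} ‖ Q^{⊗n}) ≤ n · JS_p(P ‖ Q). -/

import Mathlib

open Real BigOperators

/-- Kullback–Leibler divergence between finitely supported distributions,
with the convention `0·log(0/q) = 0` (via `Real.log`). -/
noncomputable def KLdiv {α : Type*} [Fintype α] (P Q : α → ℝ) : ℝ :=
  ∑ x, P x * Real.log (P x / Q x)

/-- Jensen–Shannon divergence with weight `p`. -/
noncomputable def JSdiv {α : Type*} [Fintype α] (p : ℝ) (P Q : α → ℝ) : ℝ :=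
  p * KLdiv P (fun x => p * P x + (1 - p) * Q x) +
    (1 - p) * KLdiv Q (fun x => p * P x + (1 - p) * Q x)

/-- `n`-fold product (tensor power) of a distribution. -/
noncomputable def prodPow {α : Type*} (P : α → ℝ) (n : ℕ) : (Fin n → α) → ℝ :=
  fun f => ∏ k, P (f k)

/-- Splitting the log of a quotient inside a KL-type sum. -/
lemma sum_mul_log_div {β : Type*} [Fintype β] (R S : β → ℝ)
    (h : ∀ x, R x ≠ 0 → S x ≠ 0) :
    ∑ x, R x * Real.log (R x / S x)
      = ∑ x, R x * Real.log (R x) - ∑ x, R x * Real.log (S x) := by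
  rw [← Finset.sum_sub_distrib]
  refine Finset.sum_congr rfl fun x _ => ?_
  rcases eq_or_ne (R x) 0 with h0 | h0
  · simp [h0]
  · rw [Real.log_div h0 (h x h0)]; ring

/-- Integrating out all but one coordinate of a tensor power. -/
lemma sum_prodPow_mul {α : Type*} [Fintype α] {P : α → ℝ} (hP1 : ∑ x, P x = 1)
    {n : ℕ} (c : α → ℝ) (k : Fin n) :
    ∑ f : Fin n → α, prodPow P n f * c (f k) = ∑ x, P x * c x := by
  classical
  have h := Fintype.prod_sum (fun (j : Fin n) (x : α) => if j = k then P x * c x else P x)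
  have hL : (∏ j : Fin n, ∑ x, (if j = k then P x * c x else P x)) = ∑ x, P x * c x := by
    rw [Finset.prod_eq_single k]
    · simp
    · intro j _ hj; simp [hj, hP1]
    · simp
  have hR : ∀ f : Fin n → α,
      (∏ j, (if j = k then P (f j) * c (f j) else P (f j))) = prodPow P n f * c (f k) := by
    intro f
    have e : ∀ j, (if j = k then P (f j) * c (f j) else P (f j))
        = P (f j) * (if j = k then c (f j) else 1) := by
      intro j; split <;> ring
    simp_rw [e]
    rw [Finset.prod_mul_distrib, Finset.prod_ite_eq' Finset.univ k (fun j => c (f j))]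
    simp [prodPow]
  rw [← hL, h]
  exact Finset.sum_congr rfl fun f _ => (hR f).symm

/-- Entropy-type sums of tensor powers are `n` times the one-dimensional ones. -/
lemma ent_prodPow {α : Type*} [Fintype α] {P c : α → ℝ} (hP1 : ∑ x, P x = 1)
    (hc : ∀ x, P x ≠ 0 → c x ≠ 0) {n : ℕ} :
    ∑ f : Fin n → α, prodPow P n f * Real.log (prodPow c n f)
      = n * ∑ x, P x * Real.log (c x) := by
  classical
  have key : ∀ f : Fin n → α, prodPow P n f * Real.log (prodPow c n f)
      = ∑ k, prodPow P n f * Real.log (c (f k)) := by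
    intro f
    rcases eq_or_ne (prodPow P n f) 0 with h0 | h0
    · simp [h0]
    · have hne : ∀ k : Fin n, P (f k) ≠ 0 := by
        intro k hk
        exact h0 (Finset.prod_eq_zero (Finset.mem_univ k) hk)
      have : prodPow c n f = ∏ k, c (f k) := rfl
      rw [this, Real.log_prod (fun k _ => hc _ (hne k)), Finset.mul_sum]
  simp_rw [key]
  rw [Finset.sum_comm]
  rw [Finset.sum_congr rfl fun (k : Fin n) _ => sum_prodPow_mul hP1 (fun x => Real.log (c x)) k]
  simp [Finset.card_univ, mul_comm]

/-- Gibbs' inequality (with the Lean division/log conventions, under a support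
hypothesis). -/
lemma gibbs {β : Type*} [Fintype β] (R S : β → ℝ) (hR0 : ∀ x, 0 ≤ R x)
    (hS0 : ∀ x, 0 ≤ S x) (hR1 : ∑ x, R x = 1) (hS1 : ∑ x, S x = 1)
    (h : ∀ x, R x ≠ 0 → S x ≠ 0) :
    0 ≤ ∑ x, R x * Real.log (R x / S x) := by
  have key : ∀ x, R x - S x ≤ R x * Real.log (R x / S x) := by
    intro x
    rcases eq_or_ne (R x) 0 with h0 | h0
    · simp [h0, hS0 x]
    · have hR : 0 < R x := (hR0 x).lt_of_ne (Ne.symm h0)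
      have hS : 0 < S x := (hS0 x).lt_of_ne (Ne.symm (h x h0))
      have e : Real.log (R x / S x) = -Real.log (S x / R x) := by
        rw [← Real.log_inv, inv_div]
      have hlog : Real.log (S x / R x) ≤ S x / R x - 1 :=
        Real.log_le_sub_one_of_pos (by positivity)
      have hdiv : R x * (S x / R x) = S x := by field_simp
      rw [e]
      nlinarith [mul_le_mul_of_nonneg_left hlog hR.le]
  calc (0:ℝ) = ∑ x, (R x - S x) := by rw [Finset.sum_sub_distrib, hR1, hS1]; ring
    _ ≤ _ := Finset.sum_le_sum fun x _ => key x

/-- The Jensen–Shannon divergence is subadditive under tensor powers: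
`JS_p(P^{⊗n} ‖ Q^{⊗n}) ≤ n · JS_p(P ‖ Q)`. -/
theorem stmt_6 {α : Type*} [Fintype α] (P Q : α → ℝ) (p : ℝ)
    (hP0 : ∀ x, 0 ≤ P x) (hQ0 : ∀ x, 0 ≤ Q x)
    (hP1 : ∑ x, P x = 1) (hQ1 : ∑ x, Q x = 1)
    (hp : p ∈ Set.Ioo (0:ℝ) 1) (n : ℕ) (hn : 1 ≤ n) :
    JSdiv p (prodPow P n) (prodPow Q n) ≤ n * JSdiv p P Q := by
  classical
  obtain ⟨hp0, hp1⟩ := hp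
  have hp1' : (0:ℝ) < 1 - p := by linarith
  set M : α → ℝ := fun x => p * P x + (1 - p) * Q x with hMdef
  have hM0 : ∀ x, 0 ≤ M x := fun x =>
    add_nonneg (mul_nonneg hp0.le (hP0 x)) (mul_nonneg hp1'.le (hQ0 x))
  have hM1 : ∑ x, M x = 1 := by
    simp only [hMdef, Finset.sum_add_distrib, ← Finset.mul_sum, hP1, hQ1]; ring
  have hMP : ∀ x, P x ≠ 0 → M x ≠ 0 := by
    intro x hx
    have h1 : 0 < P x := (hP0 x).lt_of_ne (Ne.symm hx)
    have h2 : 0 ≤ (1 - p) * Q x := mul_nonneg hp1'.le (hQ0 x)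
    have : 0 < M x := by simp only [hMdef]; nlinarith
    exact this.ne'
  have hMQ : ∀ x, Q x ≠ 0 → M x ≠ 0 := by
    intro x hx
    have h1 : 0 < Q x := (hQ0 x).lt_of_ne (Ne.symm hx)
    have h2 : 0 ≤ p * P x := mul_nonneg hp0.le (hP0 x)
    have : 0 < M x := by simp only [hMdef]; nlinarith
    exact this.ne'
  -- level-n objects
  set P' : (Fin n → α) → ℝ := prodPow P n with hP'def
  set Q' : (Fin n → α) → ℝ := prodPow Q n with hQ'def
  set Mn : (Fin n → α) → ℝ := fun f => p * P' f + (1 - p) * Q' f with hMndef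
  have hP'0 : ∀ f, 0 ≤ P' f := fun f => Finset.prod_nonneg fun k _ => hP0 _
  have hQ'0 : ∀ f, 0 ≤ Q' f := fun f => Finset.prod_nonneg fun k _ => hQ0 _
  have hMn0 : ∀ f, 0 ≤ Mn f := fun f =>
    add_nonneg (mul_nonneg hp0.le (hP'0 f)) (mul_nonneg hp1'.le (hQ'0 f))
  have k0 : Fin n := ⟨0, hn⟩
  have hP'1 : ∑ f, P' f = 1 := by
    have := sum_prodPow_mul (P := P) hP1 (fun _ => (1:ℝ)) k0
    simpa [hP1] using this
  have hQ'1 : ∑ f, Q' f = 1 := by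
    have := sum_prodPow_mul (P := Q) hQ1 (fun _ => (1:ℝ)) k0
    simpa [hQ1] using this
  have hM'1 : ∑ f, prodPow M n f = 1 := by
    have := sum_prodPow_mul (P := M) hM1 (fun _ => (1:ℝ)) k0
    simpa [hM1] using this
  have hMn1 : ∑ f, Mn f = 1 := by
    simp only [hMndef, Finset.sum_add_distrib, ← Finset.mul_sum, hP'1, hQ'1]; ring
  have hMnP : ∀ f, P' f ≠ 0 → Mn f ≠ 0 := by
    intro f hf
    have h1 : 0 < P' f := (hP'0 f).lt_of_ne (Ne.symm hf)
    have h2 : 0 ≤ (1 - p) * Q' f := mul_nonneg hp1'.le (hQ'0 f)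
    have : 0 < Mn f := by simp only [hMndef]; nlinarith
    exact this.ne'
  have hMnQ : ∀ f, Q' f ≠ 0 → Mn f ≠ 0 := by
    intro f hf
    have h1 : 0 < Q' f := (hQ'0 f).lt_of_ne (Ne.symm hf)
    have h2 : 0 ≤ p * P' f := mul_nonneg hp0.le (hP'0 f)
    have : 0 < Mn f := by simp only [hMndef]; nlinarith
    exact this.ne'
  have hMnS : ∀ f, Mn f ≠ 0 → prodPow M n f ≠ 0 := by
    intro f hf hS
    apply hf
    obtain ⟨k, _, hk⟩ := Finset.prod_eq_zero_iff.mp hS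
    have hPk : P (f k) = 0 := by
      by_contra hc
      exact hMP _ hc hk
    have hQk : Q (f k) = 0 := by
      by_contra hc
      exact hMQ _ hc hk
    have hP'f : P' f = 0 := Finset.prod_eq_zero (Finset.mem_univ k) hPk
    have hQ'f : Q' f = 0 := Finset.prod_eq_zero (Finset.mem_univ k) hQk
    simp [hMndef, hP'f, hQ'f]
  -- entropy computations
  have eP : ∑ f, P' f * Real.log (P' f) = n * ∑ x, P x * Real.log (P x) :=
    ent_prodPow hP1 (fun x hx => hx)
  have eQ : ∑ f, Q' f * Real.log (Q' f) = n * ∑ x, Q x * Real.log (Q x) :=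
    ent_prodPow hQ1 (fun x hx => hx)
  have ePM : ∑ f, P' f * Real.log (prodPow M n f) = n * ∑ x, P x * Real.log (M x) :=
    ent_prodPow hP1 hMP
  have eQM : ∑ f, Q' f * Real.log (prodPow M n f) = n * ∑ x, Q x * Real.log (M x) :=
    ent_prodPow hQ1 hMQ
  -- Gibbs inequality at level n
  have hgibbs : 0 ≤ ∑ f, Mn f * Real.log (Mn f / prodPow M n f) :=
    gibbs Mn (prodPow M n) hMn0 (fun f => Finset.prod_nonneg fun k _ => hM0 _)
      hMn1 hM'1 hMnS
  rw [sum_mul_log_div _ _ hMnS] at hgibbs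
  -- compute ∑ Mn log (prodPow M n)
  have eMnS : ∑ f, Mn f * Real.log (prodPow M n f)
      = p * (n * ∑ x, P x * Real.log (M x)) + (1 - p) * (n * ∑ x, Q x * Real.log (M x)) := by
    rw [← ePM, ← eQM]
    simp only [hMndef, add_mul, Finset.sum_add_distrib, Finset.mul_sum, mul_assoc]
  -- express ∑ Mn log Mn in terms of the two KL pieces at level n
  have eMn : ∑ f, Mn f * Real.log (Mn f)
      = p * ∑ f, P' f * Real.log (Mn f) + (1 - p) * ∑ f, Q' f * Real.log (Mn f) := by
    simp only [hMndef, add_mul, Finset.sum_add_distrib, Finset.mul_sum, mul_assoc]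
  -- unfold both sides
  rw [JSdiv, JSdiv, KLdiv, KLdiv, KLdiv, KLdiv]
  rw [sum_mul_log_div P' _ hMnP, sum_mul_log_div Q' _ hMnQ,
    sum_mul_log_div P M hMP, sum_mul_log_div Q M hMQ]
  rw [eMnS, eMn] at hgibbs
  rw [eP, eQ]
  nlinarith [hgibbs]
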